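/- Let ρ be a density matrix on ℂ^n ⊗ ℂ^n that does not belong to S_k. Then there exists a Hermitian matrix H (indexed by Fin n × Fin n) such that Tr(Hρ) < 0 and Tr(Hσ) ≥ 0 for every σ ∈ S_k. -/

import Mathlib

open Matrix BigOperators
open scoped ComplexOrder

set_option maxHeartbeats 1000000

/-- The `n × n` matrix `M_ψ` associated to a vector `ψ ∈ ℂ^α ⊗ ℂ^β`,
with entries `(M_ψ)_{ij} = ⟨e_i ⊗ e_j, ψ⟩ = ψ (i, j)`. -/
def matOfVec {α β : Type*} (ψ : α × β → ℂ) : Matrix α β ℂ :=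
  Matrix.of fun i j => ψ (i, j)

/-- The Schmidt rank of a bipartite vector is the rank of its associated matrix. -/
noncomputable def schmidtRank {α β : Type*} [Fintype β] (ψ : α × β → ℂ) : ℕ :=
  (matOfVec ψ).rank

/-- `ψ` is a unit vector. -/
def IsUnitVec {γ : Type*} [Fintype γ] (ψ : γ → ℂ) : Prop :=
  ∑ x, Complex.normSq (ψ x) = 1

/-- The outer product `|ψ⟩⟨ψ|`. -/
def outer {γ : Type*} (ψ : γ → ℂ) : Matrix γ γ ℂ :=
  Matrix.of fun x y => ψ x * star (ψ y)

/-- `ρ ∈ S_k`: `ρ` admits a decomposition `ρ = ∑ i, p i • |ψ i⟩⟨ψ i|` with `p i ≥ 0`,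
`∑ i, p i = 1`, each `ψ i` a unit vector of Schmidt rank at most `k`. -/
def InSchmidtClass {α : Type*} [Fintype α] (k : ℕ)
    (ρ : Matrix (α × α) (α × α) ℂ) : Prop :=
  ∃ (m : ℕ) (p : Fin m → ℝ) (ψ : Fin m → α × α → ℂ),
    (∀ i, 0 ≤ p i) ∧ (∑ i, p i) = 1 ∧
    (∀ i, IsUnitVec (ψ i)) ∧ (∀ i, schmidtRank (ψ i) ≤ k) ∧
    ρ = ∑ i, (p i : ℂ) • outer (ψ i)

/-- The map `1 ⊗ Λ`, applying `Λ` to each block of a matrix indexed by `γ × Fin n`. -/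
def blockMap {γ : Type*} {n m : ℕ}
    (Λ : Matrix (Fin n) (Fin n) ℂ → Matrix (Fin m) (Fin m) ℂ)
    (X : Matrix (γ × Fin n) (γ × Fin n) ℂ) : Matrix (γ × Fin m) (γ × Fin m) ℂ :=
  Matrix.of fun a b => Λ (Matrix.of fun s t => X (a.1, s) (b.1, t)) a.2 b.2

/-- `Λ` is Hermiticity-preserving: `Λ(X†) = Λ(X)†`. -/
def HermPreserving {n m : ℕ}
    (Λ : Matrix (Fin n) (Fin n) ℂ → Matrix (Fin m) (Fin m) ℂ) : Prop :=
  ∀ X, Λ Xᴴ = (Λ X)ᴴ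

/-- `Λ` is `k`-positive: `(1 ⊗ Λ)(|ψ⟩⟨ψ|)` is positive semidefinite for every
unit vector `ψ ∈ ℂ^N ⊗ ℂ^N` of Schmidt rank at most `k`. -/
def kPositive {N : ℕ} (k : ℕ)
    (Λ : Matrix (Fin N) (Fin N) ℂ → Matrix (Fin N) (Fin N) ℂ) : Prop :=
  ∀ ψ : Fin N × Fin N → ℂ, IsUnitVec ψ → schmidtRank ψ ≤ k →
    (blockMap Λ (outer ψ)).PosSemidef

/-! ### Auxiliary lemmas -/

lemma coe_smul_mat {γ : Type*} (p : ℝ) (M : Matrix γ γ ℂ) : (p : ℂ) • M = p • M := by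
  ext i j
  simp [Matrix.smul_apply, Complex.real_smul]

lemma outer_isHermitian {γ : Type*} (ψ : γ → ℂ) : (outer ψ).IsHermitian := by
  ext i j
  simp [outer, Matrix.conjTranspose_apply, mul_comm]

lemma trace_outer {γ : Type*} [Fintype γ] (ψ : γ → ℂ) (h : IsUnitVec ψ) :
    (outer ψ).trace = 1 := by
  have h2 : (outer ψ).trace = ((∑ x, Complex.normSq (ψ x) : ℝ) : ℂ) := by
    simp only [Matrix.trace, Matrix.diag, outer, Matrix.of_apply]
    push_cast
    refine Finset.sum_congr rfl fun x _ => ?_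
    rw [← Complex.mul_conj]
    rfl
  rw [h2, h]
  norm_num

section SchmidtBasic

variable {α : Type*} [Fintype α] {k : ℕ}

lemma sk_isHermitian {σ : Matrix (α × α) (α × α) ℂ} (h : InSchmidtClass k σ) :
    σ.IsHermitian := by
  obtain ⟨m, p, ψ, _, _, _, _, rfl⟩ := h
  unfold Matrix.IsHermitian
  rw [Matrix.conjTranspose_sum]
  refine Finset.sum_congr rfl fun i _ => ?_
  rw [Matrix.conjTranspose_smul, (outer_isHermitian (ψ i)), Complex.star_def,
    Complex.conj_ofReal]

lemma sk_trace {σ : Matrix (α × α) (α × α) ℂ} (h : InSchmidtClass k σ) :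
    σ.trace = 1 := by
  obtain ⟨m, p, ψ, _, hsum, hunit, _, rfl⟩ := h
  rw [Matrix.trace_sum]
  calc ∑ i, ((p i : ℂ) • outer (ψ i)).trace = ∑ i, (p i : ℂ) := by
        refine Finset.sum_congr rfl fun i _ => ?_
        rw [Matrix.trace_smul, trace_outer _ (hunit i), smul_eq_mul, mul_one]
    _ = 1 := by rw [← Complex.ofReal_sum, hsum, Complex.ofReal_one]

lemma sk_convex : Convex ℝ {σ : Matrix (α × α) (α × α) ℂ | InSchmidtClass k σ} := by
  rintro x ⟨m1, p1, ψ1, hp1, hs1, hu1, hr1, rfl⟩ y ⟨m2, p2, ψ2, hp2, hs2, hu2, hr2, rfl⟩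
    a b ha hb hab
  refine ⟨m1 + m2, Fin.append (fun i => a * p1 i) (fun i => b * p2 i), Fin.append ψ1 ψ2,
    ?_, ?_, ?_, ?_, ?_⟩
  · intro i
    refine Fin.addCases (fun i => ?_) (fun i => ?_) i
    · rw [Fin.append_left]; exact mul_nonneg ha (hp1 i)
    · rw [Fin.append_right]; exact mul_nonneg hb (hp2 i)
  · rw [Fin.sum_univ_add]
    simp only [Fin.append_left, Fin.append_right]
    rw [← Finset.mul_sum, ← Finset.mul_sum, hs1, hs2, mul_one, mul_one]
    exact hab
  · intro i
    refine Fin.addCases (fun i => ?_) (fun i => ?_) i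
    · rw [Fin.append_left]; exact hu1 i
    · rw [Fin.append_right]; exact hu2 i
  · intro i
    refine Fin.addCases (fun i => ?_) (fun i => ?_) i
    · rw [Fin.append_left]; exact hr1 i
    · rw [Fin.append_right]; exact hr2 i
  · rw [Fin.sum_univ_add]
    simp only [Fin.append_left, Fin.append_right]
    congr 1
    · rw [Finset.smul_sum]
      refine Finset.sum_congr rfl fun i _ => ?_
      rw [coe_smul_mat, coe_smul_mat, smul_smul]
    · rw [Finset.smul_sum]
      refine Finset.sum_congr rfl fun i _ => ?_
      rw [coe_smul_mat, coe_smul_mat, smul_smul]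

end SchmidtBasic

/-! ### Bounded rank factorization -/

lemma euclidean_coord_le {n : ℕ} (x : EuclideanSpace ℂ (Fin n)) (i : Fin n) :
    ‖x i‖ ≤ ‖x‖ := by
  rw [EuclideanSpace.norm_eq]
  have h1 : ‖x i‖ = Real.sqrt (‖x i‖ ^ 2) := by
    rw [Real.sqrt_sq (norm_nonneg _)]
  rw [h1]
  apply Real.sqrt_le_sqrt
  exact Finset.single_le_sum (f := fun j => ‖x j‖ ^ 2) (fun j _ => sq_nonneg _)
    (Finset.mem_univ i)

lemma exists_factor {n k : ℕ} (M : Matrix (Fin n) (Fin n) ℂ) (hr : M.rank ≤ k) :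
    ∃ (A : Matrix (Fin n) (Fin k) ℂ),
      (∀ i j, ‖A i j‖ ≤ 1) ∧ M = A * (Aᴴ * M) := by
  classical
  set W : Submodule ℂ (EuclideanSpace ℂ (Fin n)) := Submodule.span ℂ (Set.range (fun c => WithLp.toLp 2 (Mᵀ c))) with hW
  have hfr : Module.finrank ℂ W = M.rank := by
    rw [M.rank_eq_finrank_span_cols, hW,
      ← (WithLp.linearEquiv 2 ℂ (Fin n → ℂ)).symm.finrank_map_eq, Submodule.map_span,
      ← Set.range_comp]
    rfl
  set r := Module.finrank ℂ W with hrdef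
  have hrk : r ≤ k := hfr ▸ hr
  let b : OrthonormalBasis (Fin r) ℂ W := stdOrthonormalBasis ℂ W
  set A : Matrix (Fin n) (Fin k) ℂ :=
    Matrix.of (fun i j =>
      if h : (j : ℕ) < r then ((b ⟨j, h⟩ : W) : EuclideanSpace ℂ (Fin n)) i else 0) with hA
  have hsum : ∀ (F : Fin r → ℂ),
      ∑ j : Fin k, (if h : (j : ℕ) < r then F ⟨j, h⟩ else 0) = ∑ jr : Fin r, F jr := by
    intro F
    rw [← Finset.sum_subset
      (Finset.subset_univ ((Finset.univ : Finset (Fin r)).map (Fin.castLEEmb hrk)))]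
    · rw [Finset.sum_map]
      apply Finset.sum_congr rfl
      intro jr _
      rw [dif_pos (by simpa using jr.isLt)]
      congr 1
    · intro j _ hj
      rw [dif_neg]
      intro hlt
      apply hj
      simp only [Finset.mem_map, Finset.mem_univ, true_and]
      exact ⟨⟨(j : ℕ), hlt⟩, by ext; simp⟩
  have key : ∀ (x : EuclideanSpace ℂ (Fin n)), x ∈ W → ∀ i : Fin n,
      ∑ jr : Fin r, (∑ s, (starRingEnd ℂ) (((b jr : W) : EuclideanSpace ℂ (Fin n)) s) * x s)
        * ((b jr : W) : EuclideanSpace ℂ (Fin n)) i = x i := by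
    intro x hx i
    have hco := congrArg (Subtype.val) (b.sum_repr' ⟨x, hx⟩)
    rw [Submodule.coe_sum] at hco
    simp only [Submodule.coe_smul] at hco
    have hco2 := congrArg (fun v : EuclideanSpace ℂ (Fin n) => v i) hco
    simp only [WithLp.ofLp_sum, Finset.sum_apply] at hco2
    rw [← hco2]
    apply Finset.sum_congr rfl
    intro jr _
    rw [PiLp.smul_apply, smul_eq_mul, Submodule.coe_inner, PiLp.inner_apply]
    simp only [RCLike.inner_apply]
    congr 1
    exact Finset.sum_congr rfl fun s _ => mul_comm _ _
  refine ⟨A, ?_, ?_⟩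
  · intro i j
    rw [hA]
    simp only [Matrix.of_apply]
    split
    · rename_i h
      refine (euclidean_coord_le _ _).trans ?_
      rw [Submodule.norm_coe]
      exact le_of_eq (b.orthonormal.1 _)
    · simp
  · ext i c
    have hcol : (WithLp.toLp 2 (Mᵀ c) : EuclideanSpace ℂ (Fin n)) ∈ W := Submodule.subset_span ⟨c, rfl⟩
    calc M i c
        = ∑ jr : Fin r,
            (∑ s, (starRingEnd ℂ) (((b jr : W) : EuclideanSpace ℂ (Fin n)) s)
              * (WithLp.toLp 2 (Mᵀ c) : EuclideanSpace ℂ (Fin n)) s)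
            * ((b jr : W) : EuclideanSpace ℂ (Fin n)) i :=
          (key (WithLp.toLp 2 (Mᵀ c)) hcol i).symm
      _ = ∑ j : Fin k, A i j * (Aᴴ * M) j c := by
          rw [← hsum (fun jr =>
            (∑ s, (starRingEnd ℂ) (((b jr : W) : EuclideanSpace ℂ (Fin n)) s)
              * (WithLp.toLp 2 (Mᵀ c) : EuclideanSpace ℂ (Fin n)) s)
            * ((b jr : W) : EuclideanSpace ℂ (Fin n)) i)]
          apply Finset.sum_congr rfl
          intro j _
          rw [hA]
          simp only [Matrix.of_apply, Matrix.mul_apply, Matrix.conjTranspose_apply]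
          split
          · rename_i h
            rw [mul_comm]
            rfl
          · simp
      _ = (A * (Aᴴ * M)) i c := (Matrix.mul_apply).symm

/-! ### Compactness of the set of unit vectors of bounded Schmidt rank -/

lemma isCompact_unitRank {n k : ℕ} :
    IsCompact {ψ : Fin n × Fin n → ℂ | IsUnitVec ψ ∧ schmidtRank ψ ≤ k} := by
  classical
  set T : Set (Matrix (Fin n) (Fin k) ℂ × Matrix (Fin k) (Fin n) ℂ) :=
    {q | (∀ i j, ‖q.1 i j‖ ≤ 1) ∧ (∀ i j, ‖q.2 i j‖ ≤ (n : ℝ)) ∧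
      IsUnitVec (fun x : Fin n × Fin n => (q.1 * q.2) x.1 x.2)} with hT
  have hGcont : Continuous (fun q : Matrix (Fin n) (Fin k) ℂ × Matrix (Fin k) (Fin n) ℂ =>
      (fun x : Fin n × Fin n => (q.1 * q.2) x.1 x.2)) := by
    apply continuous_pi
    intro x
    exact (continuous_fst.matrix_mul continuous_snd).matrix_elem x.1 x.2
  have hTcomp : IsCompact T := by
    have hbox : IsCompact ((Set.univ.pi fun _ : Fin n => Set.univ.pi fun _ : Fin k =>
        Metric.closedBall (0 : ℂ) 1) ×ˢ (Set.univ.pi fun _ : Fin k => Set.univ.pi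
        fun _ : Fin n => Metric.closedBall (0 : ℂ) (n : ℝ))) := by
      refine IsCompact.prod ?_ ?_ <;>
      · refine isCompact_univ_pi fun _ => isCompact_univ_pi fun _ => ?_
        exact isCompact_closedBall _ _
    refine hbox.of_isClosed_subset ?_ ?_
    · have h1 : IsClosed {q : Matrix (Fin n) (Fin k) ℂ × Matrix (Fin k) (Fin n) ℂ |
          ∀ i j, ‖q.1 i j‖ ≤ 1} := by
        have he : {q : Matrix (Fin n) (Fin k) ℂ × Matrix (Fin k) (Fin n) ℂ |
            ∀ i j, ‖q.1 i j‖ ≤ 1} = ⋂ i, ⋂ j, {q | ‖q.1 i j‖ ≤ 1} := by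
          ext q; simp
        rw [he]
        refine isClosed_iInter fun i => isClosed_iInter fun j => ?_
        exact isClosed_le ((continuous_fst.matrix_elem i j).norm) continuous_const
      have h2 : IsClosed {q : Matrix (Fin n) (Fin k) ℂ × Matrix (Fin k) (Fin n) ℂ |
          ∀ i j, ‖q.2 i j‖ ≤ (n : ℝ)} := by
        have he : {q : Matrix (Fin n) (Fin k) ℂ × Matrix (Fin k) (Fin n) ℂ |
            ∀ i j, ‖q.2 i j‖ ≤ (n : ℝ)} = ⋂ i, ⋂ j, {q | ‖q.2 i j‖ ≤ (n : ℝ)} := by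
          ext q; simp
        rw [he]
        refine isClosed_iInter fun i => isClosed_iInter fun j => ?_
        exact isClosed_le ((continuous_snd.matrix_elem i j).norm) continuous_const
      have h3 : IsClosed {q : Matrix (Fin n) (Fin k) ℂ × Matrix (Fin k) (Fin n) ℂ |
          IsUnitVec (fun x : Fin n × Fin n => (q.1 * q.2) x.1 x.2)} := by
        have hc : Continuous (fun q : Matrix (Fin n) (Fin k) ℂ × Matrix (Fin k) (Fin n) ℂ =>
            ∑ x : Fin n × Fin n, Complex.normSq ((q.1 * q.2) x.1 x.2)) := by
          refine continuous_finset_sum _ fun x _ => ?_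
          exact Complex.continuous_normSq.comp
            ((continuous_fst.matrix_mul continuous_snd).matrix_elem x.1 x.2)
        exact isClosed_eq hc continuous_const
      rw [hT, Set.setOf_and, Set.setOf_and]
      exact h1.inter (h2.inter h3)
    · rintro ⟨A, B⟩ ⟨h1, h2, _⟩
      constructor
      · intro i _
        intro j _
        simpa [Complex.dist_eq] using h1 i j
      · intro i _
        intro j _
        simpa [Complex.dist_eq] using h2 i j
  have himg : {ψ : Fin n × Fin n → ℂ | IsUnitVec ψ ∧ schmidtRank ψ ≤ k} =
      (fun q : Matrix (Fin n) (Fin k) ℂ × Matrix (Fin k) (Fin n) ℂ =>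
        (fun x : Fin n × Fin n => (q.1 * q.2) x.1 x.2)) '' T := by
    ext ψ
    constructor
    · rintro ⟨hunit, hrank⟩
      obtain ⟨A, hA1, hA2⟩ := exists_factor (matOfVec ψ) hrank
      have hMb : ∀ i j, ‖matOfVec ψ i j‖ ≤ 1 := by
        intro i j
        have h1 : Complex.normSq (ψ (i, j)) ≤ 1 := by
          rw [← hunit]
          exact Finset.single_le_sum (f := fun x => Complex.normSq (ψ x))
            (fun x _ => Complex.normSq_nonneg _) (Finset.mem_univ (i, j))
        rw [← Real.sqrt_one]
        rw [show ‖matOfVec ψ i j‖ = Real.sqrt (Complex.normSq (ψ (i, j))) from by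
          rw [Complex.norm_def]; rfl]
        exact Real.sqrt_le_sqrt h1
      refine ⟨(A, Aᴴ * matOfVec ψ), ⟨fun i j => hA1 i j, fun i j => ?_, ?_⟩, ?_⟩
      · -- bound on B entries
        show ‖(Aᴴ * matOfVec ψ) i j‖ ≤ (n : ℝ)
        rw [Matrix.mul_apply]
        refine (norm_sum_le _ _).trans ?_
        calc ∑ s, ‖Aᴴ i s * matOfVec ψ s j‖ ≤ ∑ _s : Fin n, 1 := by
              refine Finset.sum_le_sum fun s _ => ?_
              rw [norm_mul]
              refine mul_le_one₀ ?_ (norm_nonneg _) (hMb s j)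
              simpa [Matrix.conjTranspose_apply, Complex.norm_conj]
                using hA1 s i
          _ = (n : ℝ) := by simp
      · show IsUnitVec (fun x : Fin n × Fin n => (A * (Aᴴ * matOfVec ψ)) x.1 x.2)
        have heq : (fun x : Fin n × Fin n => (A * (Aᴴ * matOfVec ψ)) x.1 x.2) = ψ := by
          funext x
          rw [← hA2]
          rfl
        rw [heq]
        exact hunit
      · funext x
        show (A * (Aᴴ * matOfVec ψ)) x.1 x.2 = ψ x
        rw [← hA2]
        rfl
    · rintro ⟨⟨A, B⟩, ⟨_, _, hunit⟩, rfl⟩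
      refine ⟨hunit, ?_⟩
      have : matOfVec (fun x : Fin n × Fin n => (A * B) x.1 x.2) = A * B := rfl
      rw [schmidtRank, this]
      exact (Matrix.rank_mul_le_left A B).trans
        ((Matrix.rank_le_card_width A).trans (by simp))
  rw [himg]
  exact hTcomp.image hGcont

/-! ### Real-linear functionals and trace representations -/

attribute [local instance] Matrix.normedAddCommGroup Matrix.normedSpace

lemma trace_conjTranspose_mul {ι : Type*} [Fintype ι] (G X : Matrix ι ι ℂ)
    (hX : X.IsHermitian) :
    (Gᴴ * X).trace = (starRingEnd ℂ) ((G * X).trace) := by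
  have hXc : ∀ a b, (starRingEnd ℂ) (X b a) = X a b := fun a b => by
    conv_rhs => rw [← hX]
    rfl
  have h1 : ∀ x, (starRingEnd ℂ) ((G * X).diag x) = ∑ y, (starRingEnd ℂ) (G x y) * X x y := by
    intro x
    rw [Matrix.diag_apply, Matrix.mul_apply, map_sum]
    exact Finset.sum_congr rfl fun y _ => by rw [_root_.map_mul, hXc]
  have h2 : ∀ x, (Gᴴ * X).diag x = ∑ y, (starRingEnd ℂ) (G y x) * X y x := by
    intro x
    rw [Matrix.diag_apply, Matrix.mul_apply]
    exact Finset.sum_congr rfl fun y _ => by rw [Matrix.conjTranspose_apply]; rfl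
  rw [Matrix.trace, Matrix.trace, map_sum]
  rw [Finset.sum_congr rfl (fun x _ => h1 x), Finset.sum_congr rfl (fun x _ => h2 x)]
  exact Finset.sum_comm

lemma exists_repr {ι : Type*} [Fintype ι] [DecidableEq ι]
    (f : Matrix ι ι ℂ →L[ℝ] ℝ) :
    ∃ H0 : Matrix ι ι ℂ, ∀ X, ((H0 * X).trace).re = f X := by
  classical
  set H0 : Matrix ι ι ℂ := Matrix.of (fun a b =>
    ((f (Matrix.single b a 1) : ℝ) : ℂ)
      - Complex.I * ((f (Complex.I • Matrix.single b a 1) : ℝ) : ℂ)) with hH0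
  refine ⟨H0, fun X => ?_⟩
  have hX : X = ∑ p : ι × ι, ((X p.1 p.2).re • Matrix.single p.1 p.2 1
      + (X p.1 p.2).im • (Complex.I • Matrix.single p.1 p.2 1)) := by
    ext a b
    rw [Matrix.sum_apply]
    rw [Finset.sum_eq_single (a, b)]
    · simp [Matrix.single_apply_same, Complex.real_smul]
    · rintro ⟨c, d⟩ _ hne
      have hcd : ¬(c = a ∧ d = b) := by
        intro ⟨h1, h2⟩; exact hne (by simp [h1, h2])
      simp [Matrix.single, Matrix.smul_apply, hcd]
    · intro h
      exact absurd (Finset.mem_univ _) h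
  conv_rhs => rw [hX]
  rw [map_sum]
  have hterm : ∀ p : ι × ι, f ((X p.1 p.2).re • Matrix.single p.1 p.2 1
      + (X p.1 p.2).im • (Complex.I • Matrix.single p.1 p.2 1))
      = (X p.1 p.2).re * f (Matrix.single p.1 p.2 1)
        + (X p.1 p.2).im * f (Complex.I • Matrix.single p.1 p.2 1) := by
    intro p
    rw [map_add, ContinuousLinearMap.map_smul, ContinuousLinearMap.map_smul]
    rfl
  rw [Finset.sum_congr rfl (fun p _ => hterm p)]
  rw [Matrix.trace, Complex.re_sum]
  have hdiag : ∀ a : ι, ((H0 * X).diag a).re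
      = ∑ b, (f (Matrix.single b a 1) * (X b a).re
        + f (Complex.I • Matrix.single b a 1) * (X b a).im) := by
    intro a
    rw [Matrix.diag_apply, Matrix.mul_apply, Complex.re_sum]
    refine Finset.sum_congr rfl fun b _ => ?_
    rw [hH0]
    simp only [Matrix.of_apply]
    simp only [Complex.sub_re, Complex.mul_re, Complex.mul_im, Complex.ofReal_re,
      Complex.ofReal_im, Complex.I_re, Complex.I_im, Complex.sub_im]
    ring
  rw [Finset.sum_congr rfl (fun a _ => hdiag a)]
  rw [Fintype.sum_prod_type, Finset.sum_comm]
  refine Finset.sum_congr rfl fun a _ => Finset.sum_congr rfl fun b _ => ?_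
  ring

/-! ### Closedness of `S_k` -/

lemma psi0_mem {n k : ℕ} (hn : 0 < n) (hk : 1 ≤ k) :
    IsUnitVec (fun x : Fin n × Fin n => if x = (⟨0, hn⟩, ⟨0, hn⟩) then (1 : ℂ) else 0) ∧
    schmidtRank (fun x : Fin n × Fin n => if x = (⟨0, hn⟩, ⟨0, hn⟩) then (1 : ℂ) else 0) ≤ k := by
  classical
  set i0 : Fin n := ⟨0, hn⟩
  constructor
  · unfold IsUnitVec
    rw [Finset.sum_eq_single (i0, i0)]
    · simp
    · intro x _ hx
      simp [hx]
    · intro h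
      exact absurd (Finset.mem_univ _) h
  · have hfac : matOfVec (fun x : Fin n × Fin n => if x = (i0, i0) then (1 : ℂ) else 0)
        = (Matrix.of fun i (_ : Fin 1) => if i = i0 then (1 : ℂ) else 0)
          * (Matrix.of fun (_ : Fin 1) j => if j = i0 then (1 : ℂ) else 0) := by
      ext a b
      rw [Matrix.mul_apply]
      simp only [Matrix.of_apply, matOfVec, Finset.sum_const, Finset.card_univ,
        Fintype.card_fin, one_smul]
      by_cases ha : a = i0 <;> by_cases hb : b = i0 <;> simp [ha, hb, Prod.ext_iff]
    rw [schmidtRank, hfac]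
    refine le_trans (Matrix.rank_mul_le_left _ _) (le_trans ?_ hk)
    exact le_trans (Matrix.rank_le_card_width _) (by simp)

lemma sk_isClosed {n k : ℕ} (hn : 0 < n) (hk : 1 ≤ k) :
    IsClosed {σ : Matrix ((Fin n) × (Fin n)) ((Fin n) × (Fin n)) ℂ | InSchmidtClass k σ} := by
  classical
  set U : Set (Fin n × Fin n → ℂ) := {ψ | IsUnitVec ψ ∧ schmidtRank ψ ≤ k} with hU
  set D : ℕ := Module.finrank ℝ (Matrix ((Fin n) × (Fin n)) ((Fin n) × (Fin n)) ℂ) + 1 with hD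
  set G : (Fin D → ℝ) × (Fin D → (Fin n × Fin n) → ℂ) →
      Matrix ((Fin n) × (Fin n)) ((Fin n) × (Fin n)) ℂ :=
    fun q => ∑ i, (q.1 i : ℂ) • outer (q.2 i) with hG
  set K : Set ((Fin D → ℝ) × (Fin D → (Fin n × Fin n) → ℂ)) :=
    stdSimplex ℝ (Fin D) ×ˢ Set.univ.pi (fun _ : Fin D => U) with hK
  have hKcomp : IsCompact K :=
    (isCompact_stdSimplex _ _).prod (isCompact_univ_pi fun _ => isCompact_unitRank)
  have hGcont : Continuous G := by
    refine continuous_finset_sum _ fun i _ => ?_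
    refine Continuous.smul
      (Complex.continuous_ofReal.comp ((continuous_apply i).comp continuous_fst)) ?_
    refine continuous_matrix fun a b => ?_
    show Continuous fun q : (Fin D → ℝ) × (Fin D → (Fin n × Fin n) → ℂ) =>
      q.2 i a * star (q.2 i b)
    have h1 : Continuous fun q : (Fin D → ℝ) × (Fin D → (Fin n × Fin n) → ℂ) => q.2 i a :=
      (continuous_apply a).comp ((continuous_apply i).comp continuous_snd)
    have h2 : Continuous fun q : (Fin D → ℝ) × (Fin D → (Fin n × Fin n) → ℂ) => q.2 i b :=
      (continuous_apply b).comp ((continuous_apply i).comp continuous_snd)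
    exact h1.mul (continuous_star.comp h2)
  have himg : {σ : Matrix ((Fin n) × (Fin n)) ((Fin n) × (Fin n)) ℂ | InSchmidtClass k σ}
      = G '' K := by
    ext σ
    constructor
    · rintro ⟨m, p, ψ, hp, hs, hu, hr, rfl⟩
      set P : Set (Matrix ((Fin n) × (Fin n)) ((Fin n) × (Fin n)) ℂ) :=
        (fun φ => outer φ) '' U with hP
      have hσhull : (∑ i, (p i : ℂ) • outer (ψ i)) ∈ convexHull ℝ P := by
        have heq : (∑ i, (p i : ℂ) • outer (ψ i)) = ∑ i, p i • outer (ψ i) :=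
          Finset.sum_congr rfl fun i _ => coe_smul_mat _ _
        rw [heq]
        exact (convex_convexHull ℝ P).sum_mem (fun i _ => hp i) hs
          (fun i _ => subset_convexHull ℝ P ⟨ψ i, ⟨hu i, hr i⟩, rfl⟩)
      obtain ⟨ι, hftype, z, w, hrange, haff, hwpos, hwsum, hzsum⟩ :=
        eq_pos_convex_span_of_mem_convexHull hσhull
      have hcard : Fintype.card ι ≤ D := by
        have h1 := haff.card_le_finrank_succ
        have h2 : Module.finrank ℝ (vectorSpan ℝ (Set.range z)) ≤
            Module.finrank ℝ (Matrix ((Fin n) × (Fin n)) ((Fin n) × (Fin n)) ℂ) :=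
          Submodule.finrank_le _
        omega
      obtain ⟨emb⟩ : Nonempty (ι ↪ Fin D) :=
        Function.Embedding.nonempty_of_card_le (by simpa using hcard)
      have hzw : ∀ i : ι, ∃ φ, (IsUnitVec φ ∧ schmidtRank φ ≤ k) ∧ outer φ = z i :=
        fun i => hrange (Set.mem_range_self i)
      choose φ hφmem hφout using hzw
      set ψ0 : Fin n × Fin n → ℂ := fun x => if x = (⟨0, hn⟩, ⟨0, hn⟩) then 1 else 0 with hψ0
      have hψ0mem := psi0_mem hn hk
      set p' : Fin D → ℝ := fun j => if h : ∃ i, emb i = j then w h.choose else 0 with hp'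
      set ψ' : Fin D → (Fin n × Fin n) → ℂ :=
        fun j => if h : ∃ i, emb i = j then φ h.choose else ψ0 with hψ'
      have hchoice : ∀ i : ι, (⟨i, rfl⟩ : ∃ i', emb i' = emb i).choose = i := by
        intro i
        exact emb.injective (⟨i, rfl⟩ : ∃ i', emb i' = emb i).choose_spec
      have hsubset : (Finset.univ.map emb) ⊆ Finset.univ := Finset.subset_univ _
      refine ⟨(p', ψ'), ⟨⟨fun j => ?_, ?_⟩, fun j _ => ?_⟩, ?_⟩
      · rw [hp']
        dsimp only
        split
        · exact (hwpos _).le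
        · exact le_refl 0
      · rw [← Finset.sum_subset hsubset ?_]
        · rw [Finset.sum_map]
          rw [← hwsum]
          refine Finset.sum_congr rfl fun i _ => ?_
          rw [hp']
          dsimp only
          rw [dif_pos ⟨i, rfl⟩, hchoice i]
        · intro j _ hj
          rw [hp']
          dsimp only
          rw [dif_neg]
          rintro ⟨i, rfl⟩
          exact hj (Finset.mem_map_of_mem emb (Finset.mem_univ i))
      · rw [hψ']
        dsimp only
        split
        · exact hφmem _
        · exact hψ0mem
      · rw [hG]
        dsimp only
        rw [← Finset.sum_subset hsubset ?_]
        · rw [Finset.sum_map]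
          rw [← hzsum]
          refine Finset.sum_congr rfl fun i _ => ?_
          rw [hp', hψ']
          dsimp only
          rw [dif_pos ⟨i, rfl⟩, dif_pos ⟨i, rfl⟩, hchoice i, hφout i, coe_smul_mat]
        · intro j _ hj
          rw [hp']
          dsimp only
          rw [dif_neg]
          · norm_num
          rintro ⟨i, rfl⟩
          exact hj (Finset.mem_map_of_mem emb (Finset.mem_univ i))
    · rintro ⟨⟨p, ψf⟩, ⟨hp, hψ⟩, rfl⟩
      exact ⟨D, p, ψf, hp.1, hp.2, fun i => (hψ i (Set.mem_univ i)).1,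
        fun i => (hψ i (Set.mem_univ i)).2, rfl⟩
  rw [himg]
  exact (hKcomp.image hGcont).isClosed

/-- If a density matrix `ρ` on `ℂ^n ⊗ ℂ^n` is not in `S_k`, then there is a
Hermitian matrix `H` with `Tr(Hρ) < 0` and `Tr(Hσ) ≥ 0` for every `σ ∈ S_k`. -/
theorem exists_separating_hermitian {n k : ℕ} (hk : 1 ≤ k)
    (ρ : Matrix (Fin n × Fin n) (Fin n × Fin n) ℂ)
    (hρ : ρ.PosSemidef) (hτ : ρ.trace = 1)
    (hS : ¬ InSchmidtClass k ρ) :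
    ∃ H : Matrix (Fin n × Fin n) (Fin n × Fin n) ℂ, H.IsHermitian ∧
      ((H * ρ).trace).im = 0 ∧ ((H * ρ).trace).re < 0 ∧
      ∀ σ : Matrix (Fin n × Fin n) (Fin n × Fin n) ℂ, InSchmidtClass k σ →
        ((H * σ).trace).im = 0 ∧ 0 ≤ ((H * σ).trace).re := by
  classical
  rcases Nat.eq_zero_or_pos n with hn | hn
  · exfalso
    subst hn
    have h0 : ρ.trace = 0 := by
      simp [Matrix.trace]
    rw [h0] at hτ
    exact zero_ne_one hτ
  haveI : LocallyConvexSpace ℝ (Matrix (Fin n × Fin n) (Fin n × Fin n) ℂ) :=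
    NormedSpace.toLocallyConvexSpace
  obtain ⟨f, u, hfρ, hfS⟩ := geometric_hahn_banach_point_closed
    (sk_convex (α := Fin n) (k := k)) (sk_isClosed hn hk) hS
  obtain ⟨H0, hH0⟩ := exists_repr f
  set H1 : Matrix (Fin n × Fin n) (Fin n × Fin n) ℂ :=
    (2⁻¹ : ℂ) • (H0 + H0ᴴ) - (u : ℂ) • (1 : Matrix (Fin n × Fin n) (Fin n × Fin n) ℂ) with hH1
  have hherm : H1.IsHermitian := by
    unfold Matrix.IsHermitian
    rw [hH1, Matrix.conjTranspose_sub, Matrix.conjTranspose_smul, Matrix.conjTranspose_smul,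
      Matrix.conjTranspose_add, Matrix.conjTranspose_conjTranspose, Matrix.conjTranspose_one]
    congr 1
    · rw [add_comm]
      congr 1
      simp [Complex.star_def]
    · congr 1
      simp [Complex.star_def]
  have hts : ∀ X : Matrix (Fin n × Fin n) (Fin n × Fin n) ℂ, X.IsHermitian → X.trace = 1 →
      (H1 * X).trace = ((f X - u : ℝ) : ℂ) := by
    intro X hX htr
    rw [hH1, Matrix.sub_mul, Matrix.smul_mul, Matrix.smul_mul, Matrix.add_mul,
      Matrix.one_mul, Matrix.trace_sub, Matrix.trace_smul, Matrix.trace_smul,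
      Matrix.trace_add, htr]
    rw [trace_conjTranspose_mul H0 X hX]
    rw [Complex.add_conj]
    rw [hH0 X]
    simp only [smul_eq_mul]
    push_cast
    ring
  refine ⟨H1, hherm, ?_, ?_, ?_⟩
  · rw [hts ρ hρ.isHermitian hτ]
    simp
  · rw [hts ρ hρ.isHermitian hτ]
    simp only [Complex.ofReal_re]
    linarith
  · intro σ hσ
    rw [hts σ (sk_isHermitian hσ) (sk_trace hσ)]
    constructor
    · simp
    · simp only [Complex.ofReal_re]
      linarith [hfS σ hσ]
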